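/- Let U ⊆ ℂ be a bounded connected open set, and let W_n, W ⊆ U be connected open sets with 0 ∈ W_n for all n and 0 ∈ W. Assume (W_n) converges to W in the kernel sense and that the set F associated to (W_n) and W is empty. Then η_{W_n}(p) → η_W(p) for every p ∈ W. (This is Theorem 1.4 of the paper for the trivial single-leaf nonsingular foliation of U, for which the singular set E and the defective set S are empty; the bounded plane domain W is automatically taut.) -/

import Mathlib

open Filter Metric Topology Set

/-- The kernel of a sequence of open sets: the union over `n` of the connected
component containing `0` of the interior of `⋂ k ≥ n, W k`. -/
def seqKernel {X : Type*} [TopologicalSpace X] [Zero X] (W : ℕ → Set X) : Set X :=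
  ⋃ n, connectedComponentIn (interior (⋂ k, ⋂ (_ : n ≤ k), W k)) 0

/-- The set `F` associated to a sequence `(W n)` and a limit set `W₀`: points
outside `closure W₀` that are limits of points `p k ∈ W (n k) \ closure W₀`
along a strictly increasing sequence of indices. -/
def Fset {X : Type*} [TopologicalSpace X] (W : ℕ → Set X) (W₀ : Set X) : Set X :=
  {p | p ∉ closure W₀ ∧ ∃ nk : ℕ → ℕ, StrictMono nk ∧ ∃ pk : ℕ → X,
    (∀ k, pk k ∈ W (nk k) \ closure W₀) ∧ Tendsto pk atTop (nhds p)}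

/-- The modulus-of-uniformization function of a plane domain `Ω` (for the trivial
single-leaf foliation): the supremum of `|f'(0)|` over holomorphic maps
`f : 𝔻 → Ω` with `f 0 = p` (with `sSup ∅ = 0`). -/
noncomputable def eta (Ω : Set ℂ) (p : ℂ) : ℝ :=
  sSup {r : ℝ | ∃ f : ℂ → ℂ, DifferentiableOn ℂ f (ball (0 : ℂ) 1) ∧ f 0 = p ∧
    (∀ z ∈ ball (0 : ℂ) 1, f z ∈ Ω) ∧ r = ‖deriv f 0‖}

/-- Theorem 1.4 for the trivial single-leaf foliation of a bounded plane domain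
`U`: if `(W n)` converges to `W₀` in the kernel sense and `F = ∅`, then
`η_{W n} p → η_{W₀} p` for every `p ∈ W₀`. -/
noncomputable def etaSet (Ω : Set ℂ) (p : ℂ) : Set ℝ :=
  {r : ℝ | ∃ f : ℂ → ℂ, DifferentiableOn ℂ f (ball (0 : ℂ) 1) ∧ f 0 = p ∧
    (∀ z ∈ ball (0 : ℂ) 1, f z ∈ Ω) ∧ r = ‖deriv f 0‖}

theorem eta_def (Ω : Set ℂ) (p : ℂ) : eta Ω p = sSup (etaSet Ω p) := rfl


theorem etaSet_bddAbove {R : ℝ} {Ω : Set ℂ} (hΩ : Ω ⊆ ball (0:ℂ) R) (p : ℂ) :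
    etaSet Ω p ⊆ Set.Iic (2 * R) := by
  rintro r ⟨f, hf, hf0, hmaps, rfl⟩
  have h0 : f 0 ∈ ball (0:ℂ) R := hΩ (hmaps 0 (by simp))
  have hR : 0 < R := by
    have h := mem_ball.mp h0; have : (0:ℝ) ≤ dist (f 0) 0 := dist_nonneg; linarith
  have hmaps' : MapsTo f (ball (0:ℂ) 1) (ball (f 0) (2 * R)) := by
    intro z hz
    have h1 : f z ∈ ball (0:ℂ) R := hΩ (hmaps z hz)
    have := mem_ball.mp h1
    have := mem_ball.mp h0
    rw [mem_ball]
    calc dist (f z) (f 0) ≤ dist (f z) 0 + dist 0 (f 0) := dist_triangle _ _ _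
    _ < 2 * R := by rw [dist_comm (0:ℂ) (f 0)]; linarith
  simpa using Complex.norm_deriv_le_div_of_mapsTo_ball hf (hmaps'.mono_right ball_subset_closedBall) one_pos

theorem zero_mem_etaSet {Ω : Set ℂ} {p : ℂ} (hp : p ∈ Ω) : (0:ℝ) ∈ etaSet Ω p :=
  ⟨fun _ => p, differentiableOn_const _, rfl, fun _ _ => hp, by simp⟩


def kerPiece (W : ℕ → Set ℂ) (n : ℕ) : Set ℂ :=
  connectedComponentIn (interior (⋂ k, ⋂ (_ : n ≤ k), W k)) 0

theorem kerPiece_isOpen (W : ℕ → Set ℂ) (n : ℕ) : IsOpen (kerPiece W n) :=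
  isOpen_interior.connectedComponentIn

theorem kerPiece_mono (W : ℕ → Set ℂ) : Monotone (kerPiece W) := by
  intro a b hab
  apply connectedComponentIn_mono
  apply interior_mono
  exact Set.iInter₂_mono' (fun k hk => ⟨k, hab.trans hk, subset_rfl⟩)

theorem kerPiece_subset (W : ℕ → Set ℂ) {n m : ℕ} (h : n ≤ m) : kerPiece W n ⊆ W m :=
  (connectedComponentIn_subset _ _).trans <| interior_subset.trans <|
    Set.iInter₂_subset m h

theorem seqKernel_eq (W : ℕ → Set ℂ) : seqKernel W = ⋃ n, kerPiece W n := rfl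

/-- Compact exhaustion: a compact subset of the kernel is eventually inside `W m`. -/
theorem exists_forall_subset_of_isCompact {W : ℕ → Set ℂ} {K : Set ℂ}
    (hK : IsCompact K) (hsub : K ⊆ seqKernel W) : ∃ N, ∀ m, N ≤ m → K ⊆ W m := by
  rcases hK.elim_directed_cover (kerPiece W) (fun n => kerPiece_isOpen W n)
      (by rw [← seqKernel_eq]; exact hsub)
      ((kerPiece_mono W).directed_le) with ⟨N, hN⟩
  exact ⟨N, fun m hm x hx => kerPiece_subset W hm (hN hx)⟩




-- dilation lemma: if f witnesses with image in K := f '' closedBall 0 ρ, then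
-- g := fun z => f (ρ * z) is a witness into any Ω' ⊇ K with |g'(0)| = ρ * |f'(0)|.
theorem dilate_mem_etaSet {Ω' : Set ℂ} {p : ℂ} {f : ℂ → ℂ} {ρ : ℝ}
    (hf : DifferentiableOn ℂ f (ball (0:ℂ) 1)) (hf0 : f 0 = p)
    (hρ0 : 0 < ρ) (hρ1 : ρ < 1)
    (hK : f '' closedBall (0:ℂ) ρ ⊆ Ω') :
    (ρ * ‖deriv f 0‖) ∈ etaSet Ω' p := by
  refine ⟨fun z => f ((ρ:ℂ) * z), ?_, by simpa using hf0, ?_, ?_⟩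
  · apply DifferentiableOn.comp (t := ball (0:ℂ) 1) hf
    · exact (differentiable_id.const_mul _).differentiableOn
    · intro z hz
      simp only [mem_ball, dist_zero_right] at hz ⊢
      rw [norm_mul]
      calc ‖(ρ:ℂ)‖ * ‖z‖ ≤ ρ * 1 := by
            apply mul_le_mul _ hz.le (norm_nonneg _) hρ0.le
            simp [Complex.norm_real, abs_of_pos hρ0]
      _ < 1 := by linarith
  · intro z hz
    apply hK
    refine ⟨(ρ:ℂ) * z, ?_, rfl⟩
    simp only [mem_ball, dist_zero_right] at hz
    simp only [mem_closedBall, dist_zero_right, norm_mul]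
    calc ‖(ρ:ℂ)‖ * ‖z‖ ≤ ρ * 1 := by
          apply mul_le_mul _ hz.le (norm_nonneg _) hρ0.le
          simp [Complex.norm_real, abs_of_pos hρ0]
    _ = ρ := by ring
  · have hdf : DifferentiableAt ℂ f 0 := by
      apply hf.differentiableAt (isOpen_ball.mem_nhds (by simp))
    have : deriv (fun z => f ((ρ:ℂ) * z)) 0 = deriv f 0 * ρ := by
      have h1 : deriv (f ∘ fun z => (ρ:ℂ) * z) 0 = deriv f ((ρ:ℂ)*0) * deriv (fun z => (ρ:ℂ) * z) 0 :=
        deriv_comp 0 (by simpa using hdf) (differentiableAt_id.const_mul _)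
      have h2 : deriv (fun z : ℂ => (ρ:ℂ) * z) 0 = (ρ:ℂ) := by
        rw [deriv_const_mul_field]; simp
      rw [h2] at h1
      simpa [Function.comp_def] using h1
    rw [this]
    simp [map_mul, abs_of_pos hρ0, mul_comm]

theorem eta_nonneg {R : ℝ} {Ω : Set ℂ} (hΩ : Ω ⊆ ball (0:ℂ) R) {p : ℂ} (hp : p ∈ Ω) :
    0 ≤ eta Ω p := by
  rw [eta_def]
  exact le_csSup ⟨2*R, fun r hr => etaSet_bddAbove hΩ p hr⟩ (zero_mem_etaSet hp)

theorem eventually_mem_of_mem_kernel {W : ℕ → Set ℂ} {W₀ : Set ℂ}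
    (hker : seqKernel W = W₀) {q : ℂ} (hq : q ∈ W₀) : ∃ N, ∀ m, N ≤ m → q ∈ W m := by
  rcases exists_forall_subset_of_isCompact (isCompact_singleton (x := q))
      (by rw [hker]; exact singleton_subset_iff.mpr hq) with ⟨N, hN⟩
  exact ⟨N, fun m hm => hN m hm rfl⟩

theorem eta_lower {R : ℝ} {W : ℕ → Set ℂ} {W₀ : Set ℂ}
    (hWR : ∀ n, W n ⊆ ball (0:ℂ) R) (hW₀R : W₀ ⊆ ball (0:ℂ) R)
    (hker : seqKernel W = W₀) {p : ℂ} (hp : p ∈ W₀) {ε : ℝ} (hε : 0 < ε) :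
    ∀ᶠ n in atTop, eta W₀ p - ε < eta (W n) p := by
  have hbdd : ∀ n, BddAbove (etaSet (W n) p) :=
    fun n => ⟨2*R, fun r hr => etaSet_bddAbove (hWR n) p hr⟩
  rcases lt_or_ge (eta W₀ p - ε) 0 with hneg | hpos
  · rcases eventually_mem_of_mem_kernel hker hp with ⟨N, hN⟩
    filter_upwards [eventually_ge_atTop N] with n hn
    calc eta W₀ p - ε < 0 := hneg
    _ ≤ eta (W n) p := eta_nonneg (hWR n) (hN n hn)
  · -- eta W₀ p ≥ ε > 0
    have hη : 0 < eta W₀ p := lt_of_lt_of_le hε (by linarith)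
    have hlt : eta W₀ p - ε/2 < sSup (etaSet W₀ p) := by rw [← eta_def]; linarith
    obtain ⟨r, hrmem, hr⟩ := exists_lt_of_lt_csSup ⟨0, zero_mem_etaSet hp⟩ hlt
    obtain ⟨f, hf, hf0, hmaps, rfl⟩ := hrmem
    set r := ‖deriv f 0‖ with hr_def
    have hr0 : 0 < r := by linarith
    set ρ : ℝ := (eta W₀ p - ε/2) / r with hρ_def
    have hρ0 : 0 < ρ := by
      apply div_pos _ hr0; linarith
    have hρ1 : ρ < 1 := (div_lt_one hr0).mpr hr
    -- the compact image
    have hKc : IsCompact (f '' closedBall (0:ℂ) ρ) := by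
      apply (isCompact_closedBall _ _).image_of_continuousOn
      apply hf.continuousOn.mono
      intro z hz
      simp only [mem_closedBall, dist_zero_right] at hz
      simp only [mem_ball, dist_zero_right]
      linarith
    have hKsub : f '' closedBall (0:ℂ) ρ ⊆ W₀ := by
      rintro _ ⟨z, hz, rfl⟩
      apply hmaps
      simp only [mem_closedBall, dist_zero_right] at hz
      simp only [mem_ball, dist_zero_right]
      linarith
    rcases exists_forall_subset_of_isCompact hKc (by rw [hker]; exact hKsub) with ⟨N, hN⟩
    filter_upwards [eventually_ge_atTop N] with n hn
    have hmem := dilate_mem_etaSet (Ω' := W n) hf hf0 hρ0 hρ1 (hN n hn)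
    have : ρ * r ≤ eta (W n) p := le_csSup (hbdd n) hmem
    have hρr : ρ * r = eta W₀ p - ε/2 := by
      rw [hρ_def, div_mul_cancel₀ _ hr0.ne']
    linarith

/-- Equi-Lipschitz estimate from the Schwarz lemma: a holomorphic function on the unit
ball bounded by `R` is `(2R+1)/(1-s)`-Lipschitz on `closedBall 0 s`. -/
theorem lip_of_bounded {R s : ℝ} (hR : 0 < R) (hs1 : s < 1) {f : ℂ → ℂ}
    (hf : DifferentiableOn ℂ f (ball (0:ℂ) 1))
    (hb : ∀ z ∈ ball (0:ℂ) 1, f z ∈ closedBall (0:ℂ) R)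
    {z w : ℂ} (hz : z ∈ closedBall (0:ℂ) s) (hw : w ∈ closedBall (0:ℂ) s) :
    dist (f z) (f w) ≤ ((2*R+1)/(1-s)) * dist z w := by
  have hs0 : 0 ≤ s := le_trans dist_nonneg (mem_closedBall.mp hz)
  simp only [mem_closedBall, dist_zero_right] at hz hw
  have hzb : z ∈ ball (0:ℂ) 1 := by
    simp only [mem_ball, dist_zero_right]; linarith
  have hwb : w ∈ ball (0:ℂ) 1 := by
    simp only [mem_ball, dist_zero_right]; linarith
  have hsub : ball w (1-s) ⊆ ball (0:ℂ) 1 := by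
    intro x hx
    simp only [mem_ball, dist_zero_right] at hx ⊢
    calc ‖x‖ ≤ ‖w‖ + ‖x - w‖ := norm_le_insert' x w
    _ < s + (1-s) := by
        apply add_lt_add_of_le_of_lt hw
        rwa [← dist_eq_norm]
    _ = 1 := by ring
  have hd : DifferentiableOn ℂ f (ball w (1-s)) := hf.mono hsub
  have hmaps : MapsTo f (ball w (1-s)) (ball (f w) (2*R+1)) := by
    intro x hx
    have h1 := hb x (hsub hx)
    have h2 := hb w hwb
    simp only [mem_closedBall, dist_zero_right] at h1 h2
    rw [mem_ball]
    calc dist (f x) (f w) ≤ ‖f x‖ + ‖f w‖ := by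
          rw [dist_eq_norm]; exact norm_sub_le _ _
    _ ≤ 2*R := by linarith
    _ < 2*R + 1 := by linarith
  have hL0 : (0:ℝ) < (2*R+1)/(1-s) := by
    apply div_pos (by linarith) (by linarith)
  rcases lt_or_ge (dist z w) (1-s) with hcase | hcase
  · have := Complex.dist_le_div_mul_dist_of_mapsTo_ball hd (hmaps.mono_right ball_subset_closedBall)
      (z := z) (by rwa [mem_ball])
    linarith
  · have h1 := hb z hzb
    have h2 := hb w hwb
    simp only [mem_closedBall, dist_zero_right] at h1 h2
    calc dist (f z) (f w) ≤ ‖f z‖ + ‖f w‖ := by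
          rw [dist_eq_norm]; exact norm_sub_le _ _
    _ ≤ 2*R + 1 := by linarith
    _ = ((2*R+1)/(1-s)) * (1-s) := (div_mul_cancel₀ _ (by linarith : (1:ℝ)-s ≠ 0)).symm
    _ ≤ ((2*R+1)/(1-s)) * dist z w := by
        apply mul_le_mul_of_nonneg_left hcase hL0.le

/-- Montel-type extraction: a uniformly bounded sequence of holomorphic functions on the
unit ball has a locally uniformly convergent subsequence. -/
theorem montel {R : ℝ} (hR : 0 < R) (f : ℕ → ℂ → ℂ)
    (hdiff : ∀ k, DifferentiableOn ℂ (f k) (ball (0:ℂ) 1))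
    (hb : ∀ k, ∀ z ∈ ball (0:ℂ) 1, f k z ∈ closedBall (0:ℂ) R) :
    ∃ F : ℂ → ℂ, ∃ φ : ℕ → ℕ, StrictMono φ ∧
      TendstoLocallyUniformlyOn (fun k => f (φ k)) F atTop (ball (0:ℂ) 1) := by
  haveI : Nonempty (ball (0:ℂ) 1) := ⟨⟨0, by simp⟩⟩
  obtain ⟨u, hu⟩ := TopologicalSpace.exists_dense_seq (ball (0:ℂ) 1)
  set g : ℕ → (ℕ → ℂ) := fun k j => f k (u j) with hg
  have hgmem : ∀ k, g k ∈ Set.pi Set.univ (fun _ : ℕ => closedBall (0:ℂ) R) :=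
    fun k j _ => hb k (u j) (u j).2
  obtain ⟨L, -, φ, hφ, hconv⟩ :=
    (isCompact_univ_pi fun _ : ℕ => isCompact_closedBall (0:ℂ) R).tendsto_subseq hgmem
  have hptU : ∀ j, Tendsto (fun k => f (φ k) (u j)) atTop (𝓝 (L j)) := by
    intro j
    exact (tendsto_pi_nhds.mp hconv) j
  -- pointwise Cauchy at every point of the ball
  have hC : ∀ z ∈ ball (0:ℂ) 1, CauchySeq fun k => f (φ k) z := by
    intro z hz
    rw [Metric.cauchySeq_iff]
    intro ε hε
    have hz1 : ‖z‖ < 1 := by simpa [mem_ball, dist_zero_right] using hz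
    set s : ℝ := (1 + ‖z‖)/2 with hs_def
    have hs1 : s < 1 := by rw [hs_def]; linarith
    have hzs : ‖z‖ < s := by rw [hs_def]; linarith
    set C : ℝ := (2*R+1)/(1-s) with hC_def
    have hC0 : 0 < C := div_pos (by linarith) (by linarith)
    set δ : ℝ := min (ε/(3*(C+1))) (s - ‖z‖) with hδ_def
    have hδ0 : 0 < δ := lt_min (by positivity) (by linarith)
    obtain ⟨j, hj⟩ := hu.exists_dist_lt (⟨z, hz⟩ : ball (0:ℂ) 1) hδ0
    have hjz : dist (u j : ℂ) z < δ := by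
      rwa [Subtype.dist_eq, dist_comm] at hj
    have hujs : (u j : ℂ) ∈ closedBall (0:ℂ) s := by
      simp only [mem_closedBall, dist_zero_right]
      calc ‖(u j : ℂ)‖ ≤ ‖z‖ + dist (u j : ℂ) z := by
            rw [dist_eq_norm]
            simpa [add_comm] using norm_le_insert' (u j : ℂ) z
      _ ≤ ‖z‖ + δ := by linarith
      _ ≤ ‖z‖ + (s - ‖z‖) := by
            have := min_le_right (ε/(3*(C+1))) (s - ‖z‖); linarith
      _ = s := by ring
    have hzsmem : z ∈ closedBall (0:ℂ) s := by
      simp only [mem_closedBall, dist_zero_right]; linarith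
    obtain ⟨N, hN⟩ := Metric.cauchySeq_iff.mp (hptU j).cauchySeq (ε/3) (by linarith)
    refine ⟨N, fun m hm n hn => ?_⟩
    have lip1 := lip_of_bounded hR hs1 (hdiff (φ m)) (hb (φ m)) hzsmem hujs
    have lip2 := lip_of_bounded hR hs1 (hdiff (φ n)) (hb (φ n)) hujs hzsmem
    have hmid := hN m hm n hn
    have hCδ : C * δ ≤ ε/3 := by
      have h1 : δ ≤ ε/(3*(C+1)) := min_le_left _ _
      calc C * δ ≤ C * (ε/(3*(C+1))) := by
            apply mul_le_mul_of_nonneg_left h1 hC0.le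
      _ ≤ (C+1) * (ε/(3*(C+1))) := by
            apply mul_le_mul_of_nonneg_right (by linarith) (by positivity)
      _ = ε/3 := by field_simp
    have hd1 : dist (f (φ m) z) (f (φ m) (u j)) ≤ ε/3 := by
      calc dist (f (φ m) z) (f (φ m) (u j)) ≤ C * dist z (u j) := lip1
      _ ≤ C * δ := by
          apply mul_le_mul_of_nonneg_left _ hC0.le
          rw [dist_comm]; exact hjz.le
      _ ≤ ε/3 := hCδ
    have hd2 : dist (f (φ n) (u j)) (f (φ n) z) ≤ ε/3 := by
      calc dist (f (φ n) (u j)) (f (φ n) z) ≤ C * dist (u j : ℂ) z := lip2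
      _ ≤ C * δ := mul_le_mul_of_nonneg_left hjz.le hC0.le
      _ ≤ ε/3 := hCδ
    have tri := dist_triangle4 (f (φ m) z) (f (φ m) (u j)) (f (φ n) (u j)) (f (φ n) z)
    linarith
  -- the limit function
  have hex : ∀ z : ℂ, ∃ a : ℂ, z ∈ ball (0:ℂ) 1 → Tendsto (fun k => f (φ k) z) atTop (𝓝 a) := by
    intro z
    by_cases hz : z ∈ ball (0:ℂ) 1
    · obtain ⟨a, ha⟩ := cauchySeq_tendsto_of_complete (hC z hz)
      exact ⟨a, fun _ => ha⟩
    · exact ⟨0, fun h => absurd h hz⟩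
  choose F hF using hex
  refine ⟨F, φ, hφ, ?_⟩
  rw [tendstoLocallyUniformlyOn_iff_forall_isCompact isOpen_ball]
  intro K hKsub hKc
  rcases K.eq_empty_or_nonempty with rfl | hne
  · exact tendstoUniformlyOn_empty
  obtain ⟨x₀, hx₀K, hx₀max'⟩ := hKc.exists_isMaxOn hne continuous_norm.continuousOn
  have hx₀max : ∀ y ∈ K, ‖y‖ ≤ ‖x₀‖ := fun y hy => hx₀max' hy
  have hx₀1 : ‖x₀‖ < 1 := by simpa [mem_ball, dist_zero_right] using hKsub hx₀K
  set s : ℝ := (1 + ‖x₀‖)/2 with hs_def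
  have hs1 : s < 1 := by rw [hs_def]; linarith
  have hKs : K ⊆ closedBall (0:ℂ) s := fun y hy => by
    simp only [mem_closedBall, dist_zero_right]
    have := hx₀max y hy
    rw [hs_def]; linarith
  set C : ℝ := (2*R+1)/(1-s) with hC_def
  have hC0 : 0 < C := div_pos (by linarith) (by linarith)
  rw [Metric.tendstoUniformlyOn_iff]
  intro ε hε
  set δ : ℝ := ε/(4*(C+1)) with hδ_def
  have hδ0 : 0 < δ := by positivity
  have hCδ : C * δ ≤ ε/4 := by
    calc C * δ ≤ (C+1) * δ := by
          apply mul_le_mul_of_nonneg_right (by linarith) hδ0.le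
    _ = ε/4 := by rw [hδ_def]; field_simp
  have hcover : K ⊆ ⋃ x : K, ball (x : ℂ) δ := fun y hy =>
    mem_iUnion.mpr ⟨⟨y, hy⟩, by simp [mem_ball, hδ0]⟩
  obtain ⟨t, ht⟩ := hKc.elim_finite_subcover (fun x : K => ball (x:ℂ) δ)
    (fun _ => isOpen_ball) hcover
  have hev : ∀ᶠ k in atTop, ∀ x ∈ t, dist (f (φ k) (x : ℂ)) (F (x : ℂ)) < ε/4 := by
    rw [Filter.eventually_all_finset]
    intro x hx
    have hxb : (x:ℂ) ∈ ball (0:ℂ) 1 := hKsub x.2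
    exact (Metric.tendsto_nhds.mp (hF (x:ℂ) hxb)) (ε/4) (by linarith)
  filter_upwards [hev] with k hk z hz
  obtain ⟨x, hxt, hzx⟩ : ∃ x ∈ t, z ∈ ball (x:ℂ) δ := by
    have := ht hz
    simpa using this
  have hzs : z ∈ closedBall (0:ℂ) s := hKs hz
  have hxs : (x:ℂ) ∈ closedBall (0:ℂ) s := hKs x.2
  have hzb : z ∈ ball (0:ℂ) 1 := hKsub hz
  have hxb : (x:ℂ) ∈ ball (0:ℂ) 1 := hKsub x.2
  have hdzx : dist z (x:ℂ) ≤ δ := by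
    rw [mem_ball] at hzx; exact hzx.le
  have lipk : dist (f (φ k) (x:ℂ)) (f (φ k) z) ≤ C * δ := by
    calc dist (f (φ k) (x:ℂ)) (f (φ k) z)
        ≤ C * dist (x:ℂ) z := lip_of_bounded hR hs1 (hdiff (φ k)) (hb (φ k)) hxs hzs
    _ ≤ C * δ := by
        apply mul_le_mul_of_nonneg_left _ hC0.le
        rwa [dist_comm]
  have lipF : dist (F z) (F (x:ℂ)) ≤ C * δ := by
    have htd : Tendsto (fun k => dist (f (φ k) z) (f (φ k) (x:ℂ))) atTop
        (𝓝 (dist (F z) (F (x:ℂ)))) := (hF z hzb).dist (hF (x:ℂ) hxb)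
    apply le_of_tendsto htd
    filter_upwards with k
    calc dist (f (φ k) z) (f (φ k) (x:ℂ))
        ≤ C * dist z (x:ℂ) := lip_of_bounded hR hs1 (hdiff (φ k)) (hb (φ k)) hzs hxs
    _ ≤ C * δ := mul_le_mul_of_nonneg_left hdzx hC0.le
  have hmid := hk x hxt
  have tri := dist_triangle4 (F z) (F (x:ℂ)) (f (φ k) (x:ℂ)) (f (φ k) z)
  have hsymm : dist (F (x:ℂ)) (f (φ k) (x:ℂ)) = dist (f (φ k) (x:ℂ)) (F (x:ℂ)) :=
    dist_comm _ _
  linarith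

/-- If `F` is a nonconstant locally-uniform limit of holomorphic functions `f k` on the unit
ball, then a fixed ball around `F z₀` is eventually contained in the image of `f k`. -/
theorem eventually_ball_subset_image
    {F : ℂ → ℂ} {f : ℕ → ℂ → ℂ}
    (hdiff : ∀ k, DifferentiableOn ℂ (f k) (ball (0:ℂ) 1))
    (hconv : TendstoLocallyUniformlyOn f F atTop (ball (0:ℂ) 1))
    (hne : deriv F 0 ≠ 0)
    {z₀ : ℂ} (hz₀ : z₀ ∈ ball (0:ℂ) 1) :
    ∃ δ > 0, ∀ᶠ k in atTop, ball (F z₀) δ ⊆ f k '' (ball (0:ℂ) 1) := by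
  have h0b : (0:ℂ) ∈ ball (0:ℂ) 1 := by simp
  have hFd : DifferentiableOn ℂ F (ball (0:ℂ) 1) :=
    hconv.differentiableOn (Filter.Eventually.of_forall hdiff) isOpen_ball
  have hFan : AnalyticOnNhd ℂ F (ball (0:ℂ) 1) := hFd.analyticOnNhd isOpen_ball
  have hz₀1 : ‖z₀‖ < 1 := by simpa [mem_ball, dist_zero_right] using hz₀
  -- F is not locally constant at z₀
  have hnc : ∀ᶠ z in 𝓝[≠] z₀, F z ≠ F z₀ := by
    rcases (hFan z₀ hz₀).eventually_eq_or_eventually_ne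
        (analyticAt_const (v := F z₀)) with h | h
    · exfalso
      apply hne
      have heq : EqOn F (fun _ => F z₀) (ball (0:ℂ) 1) :=
        hFan.eqOn_of_preconnected_of_eventuallyEq analyticOnNhd_const
          (convex_ball _ _).isPreconnected hz₀ h
      have hev : ∀ᶠ z in 𝓝 (0:ℂ), F z = F z₀ := by
        filter_upwards [isOpen_ball.mem_nhds h0b] with z hz using heq hz
      have : deriv F 0 = deriv (fun _ : ℂ => F z₀) 0 := Filter.EventuallyEq.deriv_eq hev
      simpa using this
    · exact h
  obtain ⟨r₀, hr₀, hr₀ne⟩ := Metric.mem_nhdsWithin_iff.mp hnc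
  set r : ℝ := min (r₀/2) ((1 - ‖z₀‖)/2) with hr_def
  have hr : 0 < r := lt_min (by linarith) (by linarith)
  have hrr₀ : r < r₀ := lt_of_le_of_lt (min_le_left _ _) (by linarith)
  have hcb : closedBall z₀ r ⊆ ball (0:ℂ) 1 := by
    intro x hx
    rw [mem_closedBall] at hx
    have hx2 : ‖x - z₀‖ ≤ r := by rwa [← dist_eq_norm]
    have hr2 : r ≤ (1 - ‖z₀‖)/2 := min_le_right _ _
    simp only [mem_ball, dist_zero_right]
    calc ‖x‖ ≤ ‖z₀‖ + ‖x - z₀‖ := norm_le_insert' x z₀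
    _ ≤ ‖z₀‖ + (1 - ‖z₀‖)/2 := by linarith
    _ < 1 := by linarith
  have hsphsub : sphere z₀ r ⊆ ball (0:ℂ) 1 := sphere_subset_closedBall.trans hcb
  have hsphne : ∀ w ∈ sphere z₀ r, F w ≠ F z₀ := by
    intro w hw
    rw [mem_sphere] at hw
    apply hr₀ne
    constructor
    · rw [mem_ball]; rw [hw]; exact hrr₀
    · simp only [mem_compl_iff, mem_singleton_iff]
      intro h; rw [h] at hw; simp at hw; exact absurd hw.symm hr.ne'
  -- the minimum of ‖F w - F z₀‖ on the sphere
  have hsphcpt : IsCompact (sphere z₀ r) := isCompact_sphere _ _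
  have hsphnonempty : (sphere z₀ r).Nonempty :=
    NormedSpace.sphere_nonempty.mpr hr.le
  have hcont : ContinuousOn (fun w => ‖F w - F z₀‖) (sphere z₀ r) :=
    (((hFd.continuousOn.mono hsphsub).sub continuousOn_const).norm)
  obtain ⟨w₀, hw₀mem, hw₀min⟩ := hsphcpt.exists_isMinOn hsphnonempty hcont
  set ε₀ : ℝ := ‖F w₀ - F z₀‖ with hε₀_def
  have hε₀ : 0 < ε₀ := by
    rw [hε₀_def, norm_pos_iff, sub_ne_zero]
    exact hsphne w₀ hw₀mem
  have hmin : ∀ w ∈ sphere z₀ r, ε₀ ≤ ‖F w - F z₀‖ := fun w hw => hw₀min hw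
  -- uniform convergence on the closed ball
  have hUC : ∀ᶠ k in atTop, ∀ x ∈ closedBall z₀ r, dist (F x) (f k x) < ε₀/8 := by
    have := (tendstoLocallyUniformlyOn_iff_forall_isCompact isOpen_ball).mp hconv
      (closedBall z₀ r) hcb (isCompact_closedBall _ _)
    exact (Metric.tendstoUniformlyOn_iff.mp this) (ε₀/8) (by linarith)
  refine ⟨ε₀/4, by linarith, ?_⟩
  filter_upwards [hUC] with k hk
  have hz₀cb : z₀ ∈ closedBall z₀ r := mem_closedBall_self hr.le
  have hsph : ∀ w ∈ sphere z₀ r, 3/4*ε₀ ≤ ‖f k w - f k z₀‖ := by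
    intro w hw
    have e1 := hk w (sphere_subset_closedBall hw)
    have e2 := hk z₀ hz₀cb
    have e3 := hmin w hw
    have tri : dist (F w) (F z₀) ≤ dist (F w) (f k w) + dist (f k w) (f k z₀)
        + dist (f k z₀) (F z₀) := dist_triangle4 _ _ _ _
    have h4 : dist (f k z₀) (F z₀) = dist (F z₀) (f k z₀) := dist_comm _ _
    rw [← dist_eq_norm]
    rw [← dist_eq_norm] at e3
    linarith
  have hdc : DiffContOnCl ℂ (f k) (ball z₀ r) := by
    refine ⟨(hdiff k).mono (ball_subset_closedBall.trans hcb), ?_⟩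
    rw [closure_ball z₀ hr.ne']
    exact (hdiff k).continuousOn.mono hcb
  have hfreq : ∃ᶠ z in 𝓝 z₀, f k z ≠ f k z₀ := by
    by_contra hcon
    rw [Filter.not_frequently] at hcon
    simp only [not_not] at hcon
    have heq : EqOn (f k) (fun _ => f k z₀) (ball (0:ℂ) 1) :=
      ((hdiff k).analyticOnNhd isOpen_ball).eqOn_of_preconnected_of_eventuallyEq
        analyticOnNhd_const (convex_ball _ _).isPreconnected hz₀ hcon
    obtain ⟨w, hw⟩ := hsphnonempty
    have := hsph w hw
    rw [heq (hsphsub hw)] at this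
    simp at this
    linarith
  have himg := hdc.ball_subset_image_closedBall hr hsph hfreq
  intro q hq
  have hq2 : q ∈ ball (f k z₀) (3/4*ε₀/2) := by
    rw [mem_ball] at hq ⊢
    have e2 := hk z₀ hz₀cb
    calc dist q (f k z₀) ≤ dist q (F z₀) + dist (F z₀) (f k z₀) := dist_triangle _ _ _
    _ < ε₀/4 + ε₀/8 := by exact add_lt_add hq e2
    _ = 3/4*ε₀/2 := by ring
  obtain ⟨x, hx, hfx⟩ := himg hq2
  exact ⟨x, hcb hx, hfx⟩

theorem eta_upper {R : ℝ} (hR : 0 < R) {W : ℕ → Set ℂ} {W₀ : Set ℂ}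
    (hWR : ∀ n, W n ⊆ ball (0:ℂ) R) (hW₀R : W₀ ⊆ ball (0:ℂ) R)
    (hW₀open : IsOpen W₀) {p : ℂ} (hp : p ∈ W₀)
    (hsub : ∀ σ : ℕ → ℕ, StrictMono σ → seqKernel (fun k => W (σ k)) = W₀)
    {ε : ℝ} (hε : 0 < ε) :
    ∀ᶠ n in atTop, eta (W n) p < eta W₀ p + ε := by
  by_contra hcon
  rw [Filter.not_eventually] at hcon
  have hcon' : ∃ᶠ n in atTop, eta W₀ p + ε ≤ eta (W n) p :=
    hcon.mono fun n h => not_lt.mp h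
  obtain ⟨nk, hnk, hnkP⟩ := Filter.extraction_of_frequently_atTop hcon'
  have hη0 : 0 ≤ eta W₀ p := eta_nonneg hW₀R hp
  have hwit : ∀ k, ∃ f : ℂ → ℂ, DifferentiableOn ℂ f (ball (0:ℂ) 1) ∧ f 0 = p ∧
      (∀ z ∈ ball (0:ℂ) 1, f z ∈ W (nk k)) ∧
      eta W₀ p + ε/2 < ‖deriv f 0‖ := by
    intro k
    have hne : (etaSet (W (nk k)) p).Nonempty := by
      by_contra hemp
      rw [not_nonempty_iff_eq_empty] at hemp
      have h0 : eta (W (nk k)) p = 0 := by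
        rw [eta_def, hemp, Real.sSup_empty]
      have := hnkP k
      linarith
    have hlt : eta W₀ p + ε/2 < sSup (etaSet (W (nk k)) p) := by
      rw [← eta_def]
      have := hnkP k
      linarith
    obtain ⟨r, ⟨g, hgd, hg0, hgm, rfl⟩, hr⟩ := exists_lt_of_lt_csSup hne hlt
    exact ⟨g, hgd, hg0, hgm, hr⟩
  choose f hfd hf0 hfm hfder using hwit
  have hfb : ∀ k, ∀ z ∈ ball (0:ℂ) 1, f k z ∈ closedBall (0:ℂ) R := fun k z hz =>
    ball_subset_closedBall (hWR _ (hfm k z hz))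
  obtain ⟨F, φ, hφ, hconv⟩ := montel hR f hfd hfb
  set m : ℕ → ℕ := fun j => nk (φ j) with hm
  have hmmono : StrictMono m := hnk.comp hφ
  have hFd : DifferentiableOn ℂ F (ball (0:ℂ) 1) :=
    hconv.differentiableOn (.of_forall fun j => hfd (φ j)) isOpen_ball
  have h0b : (0:ℂ) ∈ ball (0:ℂ) 1 := by simp
  have hF0 : F 0 = p := by
    have h1 : Tendsto (fun j => f (φ j) 0) atTop (𝓝 (F 0)) := hconv.tendsto_at h0b
    have h2 : (fun j => f (φ j) 0) = fun _ => p := funext fun j => hf0 (φ j)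
    rw [h2] at h1
    exact tendsto_nhds_unique h1 tendsto_const_nhds
  have hdconv := hconv.deriv (.of_forall fun j => hfd (φ j)) isOpen_ball
  have hder0 : Tendsto (fun j => deriv (f (φ j)) 0) atTop (𝓝 (deriv F 0)) :=
    hdconv.tendsto_at h0b
  have habs : Tendsto (fun j => ‖deriv (f (φ j)) 0‖) atTop
      (𝓝 (‖deriv F 0‖)) := (continuous_norm.tendsto _).comp hder0
  have hFder : eta W₀ p + ε/2 ≤ ‖deriv F 0‖ :=
    ge_of_tendsto habs (.of_forall fun j => (hfder (φ j)).le)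
  have hne0 : deriv F 0 ≠ 0 := by
    intro h
    rw [h] at hFder
    simp only [norm_zero] at hFder
    linarith
  have hker' : seqKernel (fun j => W (m j)) = W₀ := hsub m hmmono
  -- F maps the unit ball into W₀
  have hmaps : ∀ z ∈ ball (0:ℂ) 1, F z ∈ W₀ := by
    set A : Set ℂ := ball (0:ℂ) 1 ∩ F ⁻¹' W₀ with hA
    have hAopen : IsOpen A :=
      hFd.continuousOn.isOpen_inter_preimage isOpen_ball hW₀open
    have hAne : (ball (0:ℂ) 1 ∩ A).Nonempty :=
      ⟨0, h0b, h0b, by rw [mem_preimage, hF0]; exact hp⟩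
    have hclosed : closure A ∩ ball (0:ℂ) 1 ⊆ A := by
      rintro z₀ ⟨hz₀cl, hz₀b⟩
      refine ⟨hz₀b, ?_⟩
      rw [mem_preimage]
      obtain ⟨δ, hδ, hball⟩ :=
        eventually_ball_subset_image (fun j => hfd (φ j)) hconv hne0 hz₀b
      have hball' : ∀ᶠ j in atTop, ball (F z₀) δ ⊆ W (m j) := by
        filter_upwards [hball] with j hj q hq
        obtain ⟨x, hx, hfx⟩ := hj hq
        rw [← hfx]
        exact hfm (φ j) x hx
      obtain ⟨J, hJ⟩ := Filter.eventually_atTop.mp hball'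
      have hFcont : ContinuousAt F z₀ :=
        (hFd.differentiableAt (isOpen_ball.mem_nhds hz₀b)).continuousAt
      have hnb : F ⁻¹' (ball (F z₀) δ) ∈ 𝓝 z₀ := hFcont (ball_mem_nhds _ hδ)
      obtain ⟨z₁, hz₁nb, hz₁A⟩ := mem_closure_iff_nhds.mp hz₀cl _ hnb
      have hz₁W₀ : F z₁ ∈ W₀ := hz₁A.2
      have hz₁ball : F z₁ ∈ ball (F z₀) δ := hz₁nb
      have hz₁ker : F z₁ ∈ seqKernel (fun j => W (m j)) := by rw [hker']; exact hz₁W₀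
      obtain ⟨N', hN'⟩ := mem_iUnion.mp hz₁ker
      set M : ℕ := max J N' with hM
      set I : Set ℂ := interior (⋂ j, ⋂ (_ : M ≤ j), W (m j)) with hI
      have hIball : ball (F z₀) δ ⊆ I := by
        rw [hI, isOpen_ball.subset_interior_iff]
        intro q hq
        rw [mem_iInter₂]
        intro j hj
        exact hJ j (le_trans (le_max_left _ _) hj) hq
      have hmemcomp : F z₁ ∈ connectedComponentIn I 0 :=
        kerPiece_mono (fun j => W (m j)) (le_max_right J N') hN'
      have hsubcomp : ball (F z₀) δ ⊆ connectedComponentIn I (F z₁) :=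
        (convex_ball _ _).isPreconnected.subset_connectedComponentIn hz₁ball hIball
      have heqcomp : connectedComponentIn I (F z₁) = connectedComponentIn I 0 :=
        (connectedComponentIn_eq hmemcomp).symm
      have : F z₀ ∈ connectedComponentIn I 0 := by
        rw [← heqcomp]
        exact hsubcomp (mem_ball_self hδ)
      rw [← hker']
      exact mem_iUnion.mpr ⟨M, this⟩
    have hfinal : ball (0:ℂ) 1 ⊆ A :=
      (convex_ball _ _).isPreconnected.subset_of_closure_inter_subset hAopen hAne hclosed
    exact fun z hz => (hfinal hz).2
  -- contradiction with the definition of eta W₀ p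
  have hmem : ‖deriv F 0‖ ∈ etaSet W₀ p := ⟨F, hFd, hF0, hmaps, rfl⟩
  have : ‖deriv F 0‖ ≤ eta W₀ p := by
    rw [eta_def]
    exact le_csSup ⟨2*R, fun r hr => etaSet_bddAbove hW₀R p hr⟩ hmem
  linarith

theorem eta_pointwise_convergence_of_kernel_convergence
    (U : Set ℂ) (hUopen : IsOpen U) (hUconn : IsConnected U)
    (hUbdd : Bornology.IsBounded U)
    (W : ℕ → Set ℂ) (W₀ : Set ℂ)
    (hWopen : ∀ n, IsOpen (W n)) (hWconn : ∀ n, IsConnected (W n))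
    (hWU : ∀ n, W n ⊆ U) (h0 : ∀ n, (0 : ℂ) ∈ W n)
    (hW₀open : IsOpen W₀) (hW₀conn : IsConnected W₀) (hW₀U : W₀ ⊆ U)
    (h0W₀ : (0 : ℂ) ∈ W₀)
    (hker : seqKernel W = W₀)
    (hsub : ∀ σ : ℕ → ℕ, StrictMono σ → seqKernel (fun k => W (σ k)) = W₀)
    (hF : Fset W W₀ = ∅) :
    ∀ p ∈ W₀, Tendsto (fun n => eta (W n) p) atTop (nhds (eta W₀ p)) := by
  intro p hp
  obtain ⟨r, hr⟩ := hUbdd.subset_closedBall 0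
  set R : ℝ := max r 0 + 1 with hR_def
  have hR : 0 < R := by
    have : (0:ℝ) ≤ max r 0 := le_max_right _ _
    rw [hR_def]; linarith
  have hUR : U ⊆ ball (0:ℂ) R := by
    intro x hx
    have := mem_closedBall.mp (hr hx)
    rw [mem_ball]
    have : dist x 0 ≤ max r 0 := le_trans this (le_max_left _ _)
    rw [hR_def]; linarith
  have hWR : ∀ n, W n ⊆ ball (0:ℂ) R := fun n => (hWU n).trans hUR
  have hW₀R : W₀ ⊆ ball (0:ℂ) R := hW₀U.trans hUR
  rw [Metric.tendsto_atTop]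
  intro ε hε
  have h1 := eta_lower hWR hW₀R hker hp (half_pos hε)
  have h2 := eta_upper hR hWR hW₀R hW₀open hp hsub (half_pos hε)
  obtain ⟨N, hN⟩ := Filter.eventually_atTop.mp (h1.and h2)
  refine ⟨N, fun n hn => ?_⟩
  obtain ⟨hlo, hhi⟩ := hN n hn
  rw [Real.dist_eq, abs_sub_lt_iff]
  constructor <;> linarith
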